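/- Let $n \ge 3$, $A$ positive definite symmetric $n\times n$, $b\ne0$, $b^2 = b^TA^{-1}b$, $\alpha^2(y)=y^TAy$, $\beta(y)=b^Ty$. Let $L(y)$ be a linear form. If the polynomial $2(5n+1)\beta^5 L^2$ is divisible by $b^2\alpha^2 - \beta^2$ in $\mathbb{R}[y_1,\dots,y_n]$, then $L = 0$. -/

import Mathlib

open Matrix MvPolynomial

noncomputable def quadPoly {n : ℕ} (A : Matrix (Fin n) (Fin n) ℝ) : MvPolynomial (Fin n) ℝ :=
  ∑ i, ∑ j, C (A i j) * X i * X j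

noncomputable def linPoly {n : ℕ} (b : Fin n → ℝ) : MvPolynomial (Fin n) ℝ :=
  ∑ i, C (b i) * X i

section aux

open Complex Finset

lemma csum1 {n : ℕ} (c p q : Fin n → ℝ) :
    ∑ i, (c i : ℂ) * ((p i : ℂ) + (q i : ℂ) * I)
      = ((∑ i, c i * p i : ℝ) : ℂ) + ((∑ i, c i * q i : ℝ) : ℂ) * I := by
  push_cast
  rw [Finset.sum_mul, ← Finset.sum_add_distrib]
  exact Finset.sum_congr rfl fun i _ => by ring

lemma csum2 {n : ℕ} (A : Matrix (Fin n) (Fin n) ℝ) (p q : Fin n → ℝ) :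
    ∑ i, ∑ j, (A i j : ℂ) * ((p i : ℂ) + (q i : ℂ) * I) * ((p j : ℂ) + (q j : ℂ) * I)
      = (((∑ i, ∑ j, A i j * p i * p j) - ∑ i, ∑ j, A i j * q i * q j : ℝ) : ℂ)
        + (((∑ i, ∑ j, A i j * p i * q j) + ∑ i, ∑ j, A i j * q i * p j : ℝ) : ℂ) * I := by
  have h : ∀ i ∈ univ, ∀ j ∈ (univ : Finset (Fin n)),
      (A i j : ℂ) * ((p i : ℂ) + (q i : ℂ) * I) * ((p j : ℂ) + (q j : ℂ) * I)
        = ((A i j * p i * p j - A i j * q i * q j : ℝ) : ℂ)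
          + ((A i j * p i * q j + A i j * q i * p j : ℝ) : ℂ) * I := by
    intro i _ j _
    push_cast
    linear_combination (A i j * q i * q j : ℂ) * Complex.I_sq
  calc ∑ i, ∑ j, (A i j : ℂ) * ((p i : ℂ) + (q i : ℂ) * I) * ((p j : ℂ) + (q j : ℂ) * I)
      = ∑ i, ∑ j, (((A i j * p i * p j - A i j * q i * q j : ℝ) : ℂ)
          + ((A i j * p i * q j + A i j * q i * p j : ℝ) : ℂ) * I) := by
        exact Finset.sum_congr rfl fun i hi => Finset.sum_congr rfl (h i hi)
    _ = _ := by
        push_cast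
        rw [← Finset.sum_add_distrib]
        simp only [Finset.sum_add_distrib, Finset.sum_sub_distrib, ← Finset.sum_mul]

/-- dot product as a linear map -/
noncomputable def dotL {n : ℕ} (v : Fin n → ℝ) : (Fin n → ℝ) →ₗ[ℝ] ℝ where
  toFun x := ∑ i, v i * x i
  map_add' x y := by simp [mul_add, Finset.sum_add_distrib]
  map_smul' c x := by
    simp only [Pi.smul_apply, smul_eq_mul, RingHom.id_apply, Finset.mul_sum]
    exact Finset.sum_congr rfl fun i _ => by ring

lemma exists_ker {n : ℕ} (hn : 3 ≤ n) (v1 v2 : Fin n → ℝ) :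
    ∃ w : Fin n → ℝ, w ≠ 0 ∧ (∑ i, v1 i * w i) = 0 ∧ (∑ i, v2 i * w i) = 0 := by
  set f : (Fin n → ℝ) →ₗ[ℝ] ℝ × ℝ := (dotL v1).prod (dotL v2) with hf
  have hni : ¬ Function.Injective f := by
    intro hinj
    have := LinearMap.finrank_le_finrank_of_injective hinj
    simp [Module.finrank_prod] at this
    omega
  rw [Function.not_injective_iff] at hni
  obtain ⟨x, y, hxy, hne⟩ := hni
  refine ⟨x - y, sub_ne_zero.mpr hne, ?_, ?_⟩
  · have := congrArg Prod.fst (map_sub f x y ▸ (by rw [hxy, sub_self] : f x - f y = 0))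
    simpa [hf, dotL] using this
  · have := congrArg Prod.snd (map_sub f x y ▸ (by rw [hxy, sub_self] : f x - f y = 0))
    simpa [hf, dotL] using this

end aux

/-- for `n ≥ 3`, if `b²α² - β²` divides `2(5n+1)β⁵L²` for a
linear form `L`, then `L = 0`. -/
theorem stmt9 {n : ℕ} (hn : 3 ≤ n) (A : Matrix (Fin n) (Fin n) ℝ) (hA : A.PosDef)
    (b : Fin n → ℝ) (hb : b ≠ 0) (b2 : ℝ) (hb2 : b2 = b ⬝ᵥ A⁻¹ *ᵥ b)
    (l : Fin n → ℝ)
    (hdvd : (C b2 * quadPoly A - (linPoly b) ^ 2) ∣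
      C (2 * (5 * (n : ℝ) + 1)) * (linPoly b) ^ 5 * (linPoly l) ^ 2) :
    linPoly l = 0 := by
  classical
  -- basic facts
  have hsym : ∀ i j, A i j = A j i := fun i j => by
    have := congrFun (congrFun hA.1 i) j
    simpa [Matrix.conjTranspose_apply] using this.symm
  set u0 : Fin n → ℝ := A⁻¹ *ᵥ b with hu0
  have hAu0 : A *ᵥ u0 = b := by
    rw [hu0, Matrix.mulVec_mulVec,
      Matrix.mul_nonsing_inv _ (Matrix.isUnit_iff_isUnit_det A |>.mp hA.isUnit),
      Matrix.one_mulVec]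
  have hb2pos : 0 < b2 := by
    rw [hb2]
    have := hA.inv.dotProduct_mulVec_pos hb
    simpa using this
  -- double sum notation
  set SA : (Fin n → ℝ) → (Fin n → ℝ) → ℝ := fun x y => ∑ i, ∑ j, A i j * x i * y j with hSA
  have hSAdot : ∀ x y, SA x y = x ⬝ᵥ A *ᵥ y := by
    intro x y
    simp only [hSA, dotProduct, Matrix.mulVec, Finset.mul_sum]
    exact Finset.sum_congr rfl fun i _ => Finset.sum_congr rfl fun j _ => by ring
  have hSAcomm : ∀ x y, SA x y = SA y x := by
    intro x y
    rw [hSA]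
    simp only
    rw [Finset.sum_comm]
    exact Finset.sum_congr rfl fun j _ => Finset.sum_congr rfl fun i _ => by rw [hsym i j]; ring
  have hSAu0 : ∀ x, SA x u0 = ∑ i, b i * x i := by
    intro x
    rw [hSAdot, hAu0, dotProduct]
    exact Finset.sum_congr rfl fun i _ => by ring
  have hbu0 : ∑ i, b i * u0 i = b2 := by
    rw [hb2]; rfl
  have hSAu0u0 : SA u0 u0 = b2 := by rw [hSAu0, hbu0]
  have hSApos : ∀ x, x ≠ 0 → 0 < SA x x := by
    intro x hx
    rw [hSAdot]
    have := hA.dotProduct_mulVec_pos hx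
    simpa using this
  have hSAadd : ∀ x y z, SA (x + y) z = SA x z + SA y z := by
    intro x y z
    simp only [hSA, Pi.add_apply, add_mul, mul_add, Finset.sum_add_distrib]
  have hSAadd' : ∀ x y z, SA x (y + z) = SA x y + SA x z := by
    intro x y z
    simp only [hSA, Pi.add_apply, add_mul, mul_add, Finset.sum_add_distrib]
  -- the key evaluation lemma
  have key : ∀ z : Fin n → ℂ,
      (b2 : ℂ) * (∑ i, ∑ j, (A i j : ℂ) * z i * z j) - (∑ i, (b i : ℂ) * z i) ^ 2 = 0 →
      (∑ i, (b i : ℂ) * z i) ≠ 0 → (∑ i, (l i : ℂ) * z i) = 0 := by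
    intro z h0 hβ
    have hd := map_dvd (aeval z : MvPolynomial (Fin n) ℝ →ₐ[ℝ] ℂ) hdvd
    have e1 : (aeval z : MvPolynomial (Fin n) ℝ →ₐ[ℝ] ℂ) (C b2 * quadPoly A - (linPoly b) ^ 2)
        = (b2 : ℂ) * (∑ i, ∑ j, (A i j : ℂ) * z i * z j) - (∑ i, (b i : ℂ) * z i) ^ 2 := by
      simp [quadPoly, linPoly]
    have e2 : (aeval z : MvPolynomial (Fin n) ℝ →ₐ[ℝ] ℂ)
        (C (2 * (5 * (n : ℝ) + 1)) * (linPoly b) ^ 5 * (linPoly l) ^ 2)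
        = (2 * (5 * (n : ℂ) + 1)) * (∑ i, (b i : ℂ) * z i) ^ 5 * (∑ i, (l i : ℂ) * z i) ^ 2 := by
      simp [linPoly]
    rw [e1, e2, h0, zero_dvd_iff] at hd
    have hc : (2 * (5 * (n : ℂ) + 1)) ≠ 0 := by
      intro h
      have : (2 * (5 * (n : ℝ) + 1)) = 0 := by exact_mod_cast h
      nlinarith [Nat.cast_nonneg (α := ℝ) n]
    have h5 : (∑ i, (b i : ℂ) * z i) ^ 5 ≠ 0 := pow_ne_zero _ hβ
    rcases mul_eq_zero.mp hd with h | h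
    · rcases mul_eq_zero.mp h with h' | h'
      · exact absurd h' hc
      · exact absurd h' h5
    · exact pow_eq_zero_iff (by norm_num) |>.mp h
  -- first application : l ⬝ u0 = 0
  have hlu0 : ∑ i, l i * u0 i = 0 := by
    have hq : ∑ i, ∑ j, (A i j : ℂ) * (u0 i : ℂ) * (u0 j : ℂ) = (b2 : ℂ) := by
      rw [← hSAu0u0]
      simp only [hSA]
      push_cast
      rfl
    have hl : ∑ i, (b i : ℂ) * (u0 i : ℂ) = (b2 : ℂ) := by
      rw [← hbu0]; push_cast; rfl
    have := key (fun i => (u0 i : ℂ)) (by rw [hq, hl]; ring)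
      (by rw [hl]; exact_mod_cast hb2pos.ne')
    have : ((∑ i, l i * u0 i : ℝ) : ℂ) = 0 := by push_cast; exact this
    exact_mod_cast this
  -- pair application
  have hpair : ∀ w1 w2 : Fin n → ℝ, (∑ i, b i * w1 i) = 0 → (∑ i, b i * w2 i) = 0 →
      SA w1 w2 = 0 → SA w1 w1 = SA w2 w2 → ∑ i, l i * w2 i = 0 := by
    intro w1 w2 hbw1 hbw2 h12 hnorm
    set p : Fin n → ℝ := u0 + w1 with hp
    set z : Fin n → ℂ := fun i => (p i : ℂ) + (w2 i : ℂ) * Complex.I with hz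
    have hSApp : SA p p = b2 + SA w1 w1 := by
      rw [hp, hSAadd, hSAadd', hSAadd', hSAu0u0, hSAcomm u0 w1, hSAu0 w1, hbw1]
      ring
    have hSApw2 : SA p w2 = 0 := by
      rw [hp, hSAadd, hSAcomm u0 w2, hSAu0 w2, hbw2, h12]; ring
    have hSAw2p : SA w2 p = 0 := by rw [hSAcomm]; exact hSApw2
    have hbp : ∑ i, b i * p i = b2 := by
      simp only [hp, Pi.add_apply, mul_add, Finset.sum_add_distrib, hbu0, hbw1]
      ring
    have hq : ∑ i, ∑ j, (A i j : ℂ) * z i * z j = (b2 : ℂ) := by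
      rw [hz]
      rw [csum2 A p w2]
      have : SA p p - SA w2 w2 = b2 := by rw [hSApp, hnorm]; ring
      rw [hSA] at this hSApw2 hSAw2p
      simp only at this hSApw2 hSAw2p
      rw [this, hSApw2, hSAw2p]
      norm_num
    have hl : ∑ i, (b i : ℂ) * z i = (b2 : ℂ) := by
      rw [hz, csum1 b p w2, hbp, hbw2]
      norm_num
    have hkey := key z (by rw [hq, hl]; ring) (by rw [hl]; exact_mod_cast hb2pos.ne')
    rw [hz, csum1 l p w2] at hkey
    have h := congrArg Complex.im hkey
    simpa using h
  -- for every w orthogonal to b : l ⬝ w = 0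
  have hperp : ∀ w : Fin n → ℝ, (∑ i, b i * w i) = 0 → ∑ i, l i * w i = 0 := by
    intro w hbw
    by_cases hw0 : w = 0
    · simp [hw0]
    obtain ⟨w', hw'ne, hbw', hAw'⟩ := exists_ker hn b (A *ᵥ w)
    have hSAw'w : SA w' w = 0 := by
      rw [hSAdot]
      rw [dotProduct]
      rw [← hAw']
      exact Finset.sum_congr rfl fun i _ => by ring
    have hww : 0 < SA w w := hSApos w hw0
    have hw'w' : 0 < SA w' w' := hSApos w' hw'ne
    set c : ℝ := Real.sqrt (SA w w / SA w' w') with hc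
    have hc2 : c ^ 2 = SA w w / SA w' w' := by
      rw [hc, sq, Real.mul_self_sqrt (le_of_lt (div_pos hww hw'w'))]
    have hsmul : ∀ x, SA (c • w') x = c * SA w' x := by
      intro x
      simp only [hSA, Pi.smul_apply, smul_eq_mul, Finset.mul_sum]
      exact Finset.sum_congr rfl fun i _ => Finset.sum_congr rfl fun j _ => by ring
    have hsmul' : ∀ x, SA x (c • w') = c * SA x w' := by
      intro x
      simp only [hSA, Pi.smul_apply, smul_eq_mul, Finset.mul_sum]
      exact Finset.sum_congr rfl fun i _ => Finset.sum_congr rfl fun j _ => by ring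
    refine hpair (c • w') w ?_ hbw ?_ ?_
    · simp only [Pi.smul_apply, smul_eq_mul]
      rw [show ∑ i, b i * (c * w' i) = c * ∑ i, b i * w' i from by
        rw [Finset.mul_sum]; exact Finset.sum_congr rfl fun i _ => by ring, hbw']
      ring
    · rw [hsmul, hSAw'w]; ring
    · rw [hsmul, hsmul', ← mul_assoc, ← sq, hc2, div_mul_cancel₀ _ hw'w'.ne']
  -- conclude l = 0
  have hall : ∀ x : Fin n → ℝ, ∑ i, l i * x i = 0 := by
    intro x
    set cx := (∑ i, b i * x i) / b2 with hcx
    have hw : ∑ i, b i * (x i - cx * u0 i) = 0 := by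
      simp only [mul_sub, Finset.sum_sub_distrib]
      rw [show ∑ i, b i * (cx * u0 i) = cx * ∑ i, b i * u0 i from by
        rw [Finset.mul_sum]; exact Finset.sum_congr rfl fun i _ => by ring]
      rw [hbu0, hcx]
      field_simp
      ring
    have hthis := hperp (fun i => x i - cx * u0 i) hw
    simp only [mul_sub, Finset.sum_sub_distrib] at hthis
    rw [show ∑ i, l i * (cx * u0 i) = cx * ∑ i, l i * u0 i from by
      rw [Finset.mul_sum]; exact Finset.sum_congr rfl fun i _ => by ring, hlu0] at hthis
    linarith [hthis]
  have hl0 : l = 0 := by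
    funext j
    have := hall (Pi.single j 1)
    simpa [Pi.single_apply, mul_ite] using this
  simp [hl0, linPoly]
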